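/- Let G be a finite group acting by ring automorphisms on a commutative ring A with unit. Assume that for every subgroup H of G of prime order, every H-fixed element of A is of the form Σ_{σ∈H} σ·a for some a ∈ A (i.e., Ĥ⁰(H,A) = 0). Then for every subgroup H of G, every H-fixed element of A is of the form Σ_{σ∈H} σ·a for some a ∈ A. -/

import Mathlib

universe u v

section Aljadeff

variable {G : Type v} [Group G] {A : Type*} [CommRing A] [MulSemiringAction G A]

/-- Coset decomposition of a sum over a finite group. -/
private lemma aljadeff_cosetSum {G₀ : Type u} [Group G₀] [Fintype G₀] (K : Subgroup G₀)
    [Fintype (G₀ ⧸ K)] [Fintype K] {β : Type*} [AddCommMonoid β] (F : G₀ → β) :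
    ∑ g : G₀, F g = ∑ q : G₀ ⧸ K, ∑ k : K, F (q.out * k) := by
  have hbij : Function.Bijective (fun qk : (G₀ ⧸ K) × K => qk.1.out * (qk.2 : G₀)) := by
    constructor
    · rintro ⟨q, k⟩ ⟨q', k'⟩ h
      have hq : q = q' := by
        have h2 := congrArg (QuotientGroup.mk (s := K)) h
        rwa [QuotientGroup.mk_mul_of_mem _ k.2, QuotientGroup.mk_mul_of_mem _ k'.2,
          QuotientGroup.out_eq', QuotientGroup.out_eq'] at h2
      subst hq
      simp only [mul_right_inj] at h
      simp [Prod.ext_iff, Subtype.ext_iff, h]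
    · intro g
      have hmem : ((QuotientGroup.mk g : G₀ ⧸ K)).out⁻¹ * g ∈ K := by
        refine QuotientGroup.eq.mp ?_
        exact QuotientGroup.out_eq' (QuotientGroup.mk g)
      exact ⟨⟨QuotientGroup.mk g, ⟨_, hmem⟩⟩, by simp⟩
  calc ∑ g : G₀, F g = ∑ qk : (G₀ ⧸ K) × K, F (qk.1.out * (qk.2 : G₀)) :=
        (Fintype.sum_bijective _ hbij _ _ (fun qk => rfl)).symm
    _ = ∑ q : G₀ ⧸ K, ∑ k : K, F (q.out * k) := Fintype.sum_prod_type _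

/-- Transfer the prime-subgroup norm hypothesis to a subgroup. -/
private lemma aljadeff_transfer {G₀ : Type u} [Group G₀] [Finite G₀] (φ : G₀ →* G)
    (P : Subgroup G₀)
    (hyp : ∀ K : Subgroup G₀, (Nat.card K).Prime → ∃ z : A, ∑ᶠ k : K, φ (k : G₀) • z = 1) :
    ∀ K : Subgroup P, (Nat.card K).Prime →
      ∃ z : A, ∑ᶠ k : K, (φ.comp P.subtype) (k : P) • z = 1 := by
  classical
  intro K hK
  have hcard : Nat.card (K.map P.subtype) = Nat.card K := (Nat.card_congr (K.equivMapOfInjective P.subtype P.subtype_injective).toEquiv).symm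
  obtain ⟨z, hz⟩ := hyp (K.map P.subtype) (by rwa [hcard])
  refine ⟨z, ?_⟩
  haveI := Fintype.ofFinite G₀
  rw [finsum_eq_sum_of_fintype] at hz ⊢
  rw [← hz]
  refine Fintype.sum_equiv (K.equivMapOfInjective P.subtype P.subtype_injective).toEquiv _ _
    (fun k => ?_)
  have hco := K.coe_equivMapOfInjective_apply P.subtype P.subtype_injective k
  show (φ.comp P.subtype) (k : P) • z = φ (((K.equivMapOfInjective P.subtype P.subtype_injective) k : (K.map P.subtype)) : G₀) • z
  rw [hco]
  rfl

end Aljadeff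

/-- Every nontrivial finite `p`-group has a normal subgroup of index `p`. -/
private lemma aljadeff_exists_normal_index_prime {p : ℕ} (hp : p.Prime) :
    ∀ (n : ℕ) (G₀ : Type u) [Group G₀] [Finite G₀], Nat.card G₀ ≤ n → IsPGroup p G₀ →
      Nontrivial G₀ → ∃ M : Subgroup G₀, M.Normal ∧ M.index = p := by
  haveI : Fact p.Prime := ⟨hp⟩
  intro n
  induction n with
  | zero =>
    intro G₀ _ _ hle _ _
    exact absurd hle (by simpa using Nat.card_pos.ne')
  | succ n IH =>
    intro G₀ _ _ hle hpg hnt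
    classical
    haveI : Nontrivial (Subgroup.center G₀) := hpg.center_nontrivial
    obtain ⟨z, hz1⟩ := exists_ne (1 : Subgroup.center G₀)
    obtain ⟨k, hk⟩ := hpg (z : G₀)
    have hdvd : orderOf (z : G₀) ∣ p ^ k := orderOf_dvd_of_pow_eq_one hk
    obtain ⟨j, hjk, hj⟩ := (Nat.dvd_prime_pow hp).mp hdvd
    have hj0 : j ≠ 0 := by
      rintro rfl
      rw [pow_zero, orderOf_eq_one_iff] at hj
      exact hz1 (by ext; simpa using hj)
    set u : G₀ := (z : G₀) ^ p ^ (j - 1) with hu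
    have hu_center : u ∈ Subgroup.center G₀ := Subgroup.pow_mem _ z.2 _
    have hup : u ^ p = 1 := by
      rw [hu, ← pow_mul, ← pow_succ, Nat.sub_add_cancel (Nat.one_le_iff_ne_zero.mpr hj0),
        ← hj]
      exact pow_orderOf_eq_one _
    have hu1 : u ≠ 1 := by
      intro h
      have h2 : orderOf (z : G₀) ∣ p ^ (j - 1) := orderOf_dvd_of_pow_eq_one h
      rw [hj] at h2
      have := (Nat.pow_dvd_pow_iff_le_right hp.one_lt).mp h2
      omega
    have hu_ord : orderOf u = p := orderOf_eq_prime hup hu1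
    have hCn : (Subgroup.zpowers u).Normal := by
      constructor
      intro c hc g
      obtain ⟨m, rfl⟩ := Subgroup.mem_zpowers_iff.mp hc
      have hcomm : Commute g u := Subgroup.mem_center_iff.mp hu_center g
      rw [show g * u ^ m * g⁻¹ = u ^ m by rw [(hcomm.zpow_right m).eq, mul_assoc,
        mul_inv_cancel, mul_one]]
      exact Subgroup.zpow_mem _ (Subgroup.mem_zpowers u) m
    haveI := hCn
    have hCcard : Nat.card (Subgroup.zpowers u) = p := by rw [Nat.card_zpowers, hu_ord]
    by_cases hQ : Nontrivial (G₀ ⧸ Subgroup.zpowers u)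
    · have hcards : Nat.card G₀ = Nat.card (G₀ ⧸ Subgroup.zpowers u) * p := by
        rw [Subgroup.card_eq_card_quotient_mul_card_subgroup (Subgroup.zpowers u), hCcard]
      have hlt : Nat.card (G₀ ⧸ Subgroup.zpowers u) < Nat.card G₀ := by
        rw [hcards]
        exact (Nat.lt_mul_iff_one_lt_right Nat.card_pos).mpr hp.one_lt
      obtain ⟨N, hNn, hNidx⟩ := IH (G₀ ⧸ Subgroup.zpowers u) (by omega)
        (hpg.to_quotient _) hQ
      refine ⟨N.comap (QuotientGroup.mk' (Subgroup.zpowers u)), hNn.comap _, ?_⟩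
      rw [Subgroup.index_comap_of_surjective _ (QuotientGroup.mk'_surjective _)]
      exact hNidx
    · have hsub : Subsingleton (G₀ ⧸ Subgroup.zpowers u) := not_nontrivial_iff_subsingleton.mp hQ
      have hq1 : Nat.card (G₀ ⧸ Subgroup.zpowers u) = 1 :=
        Nat.card_eq_one_iff_unique.mpr ⟨hsub, ⟨1⟩⟩
      have hcard : Nat.card G₀ = p := by
        rw [Subgroup.card_eq_card_quotient_mul_card_subgroup (Subgroup.zpowers u), hq1,
          hCcard, one_mul]
      exact ⟨⊥, inferInstance, by rw [Subgroup.index_bot]; exact hcard⟩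




section AljadeffClimb

variable {G : Type v} [Group G] {A : Type*} [CommRing A] [MulSemiringAction G A]

open MulAction

/-- Climbing a normal subgroup of prime index: if `1` is an `M`-norm and every prime-order
subgroup admits a norm-one element, then `1` is a `G₀`-norm. -/
private lemma aljadeff_climb {G₀ : Type u} [Group G₀] [Finite G₀] (φ : G₀ →* G)
    {p : ℕ} (hp : p.Prime) (M : Subgroup G₀) [hMn : M.Normal] (hidx : M.index = p) {x : A}
    (hx : ∑ᶠ m : M, φ (m : G₀) • x = 1)
    (hyp : ∀ K : Subgroup G₀, (Nat.card K).Prime → ∃ z : A, ∑ᶠ k : K, φ (k : G₀) • z = 1) :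
    ∃ y : A, ∑ᶠ g : G₀, φ g • y = 1 := by
  classical
  haveI := Fintype.ofFinite G₀
  haveI : Fintype (G₀ ⧸ M) := Fintype.ofFinite _
  haveI : Fintype M := Fintype.ofFinite _
  rw [finsum_eq_sum_of_fintype] at hx
  -- the type of sections of `G₀ → G₀ ⧸ M`
  let S := {s : (G₀ ⧸ M) → G₀ // ∀ q, ((s q : G₀) : G₀ ⧸ M) = q}
  haveI : Fintype S := Fintype.ofFinite _
  letI : MulAction G₀ S :=
    { smul := fun g s => ⟨fun q => g * s.1 (g⁻¹ • q), fun q => by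
        show ((g * s.1 (g⁻¹ • q) : G₀) : G₀ ⧸ M) = q
        rw [← smul_eq_mul, ← MulAction.Quotient.smul_coe, s.2, smul_inv_smul]⟩
      one_smul := fun s => Subtype.ext (funext fun q => by
        show (1 : G₀) * s.1 ((1 : G₀)⁻¹ • q) = s.1 q
        rw [inv_one, one_smul, one_mul])
      mul_smul := fun a b s => Subtype.ext (funext fun q => by
        show (a * b) * s.1 ((a * b)⁻¹ • q) = a * (b * s.1 (b⁻¹ • (a⁻¹ • q)))
        rw [mul_inv_rev, mul_smul, mul_assoc]) }
  have hsmul_def : ∀ (g : G₀) (s : S) (q : G₀ ⧸ M), (g • s).1 q = g * s.1 (g⁻¹ • q) :=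
    fun g s q => rfl
  let T : S → A := fun s => ∏ q : G₀ ⧸ M, φ (s.1 q) • x
  -- equivariance
  have hTsmul : ∀ (g : G₀) (s : S), T (g • s) = φ g • T s := by
    intro g s
    have h1 : T (g • s) = ∏ q : G₀ ⧸ M, φ g • (φ (s.1 (g⁻¹ • q)) • x) := by
      refine Finset.prod_congr rfl fun q _ => ?_
      rw [hsmul_def, map_mul, mul_smul]
    have h2 : ∏ q : G₀ ⧸ M, φ g • (φ (s.1 (g⁻¹ • q)) • x)
        = ∏ q : G₀ ⧸ M, φ g • (φ (s.1 q) • x) :=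
      Fintype.prod_bijective (fun q : G₀ ⧸ M => g⁻¹ • q) (MulAction.bijective g⁻¹) _ _
        (fun q => rfl)
    have h3 : φ g • T s = ∏ q : G₀ ⧸ M, φ g • (φ (s.1 q) • x) :=
      map_prod (MulSemiringAction.toRingHom G A (φ g)) _ _
    rw [h1, h2, ← h3]
  -- total sum is 1
  have hT1 : ∑ s : S, T s = 1 := by
    haveI : ∀ q : G₀ ⧸ M, Fintype {g : G₀ // ((g : G₀) : G₀ ⧸ M) = q} :=
      fun q => Fintype.ofFinite _
    have hinner : ∀ q : G₀ ⧸ M, ∑ c : {g : G₀ // ((g : G₀) : G₀ ⧸ M) = q}, φ c.1 • x = 1 := by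
      intro q
      have hbij : Function.Bijective
          (fun m : M => (⟨q.out * m, by
            rw [QuotientGroup.mk_mul_of_mem _ m.2, QuotientGroup.out_eq']⟩ :
            {g : G₀ // ((g : G₀) : G₀ ⧸ M) = q})) := by
        constructor
        · intro m m' h
          have := congrArg Subtype.val h
          exact Subtype.ext (mul_left_cancel this)
        · rintro ⟨g, hg⟩
          have hmem : q.out⁻¹ * g ∈ M := by
            refine QuotientGroup.eq.mp ?_
            rw [QuotientGroup.out_eq', ← hg]
          exact ⟨⟨q.out⁻¹ * g, hmem⟩, Subtype.ext (by simp)⟩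
      have h1 : ∑ c : {g : G₀ // ((g : G₀) : G₀ ⧸ M) = q}, φ c.1 • x
          = ∑ m : M, φ (q.out * m) • x :=
        (Fintype.sum_bijective _ hbij _ _ (fun m => rfl)).symm
      rw [h1]
      have h2 : ∑ m : M, φ (q.out * m) • x = φ q.out • ∑ m : M, φ (m : G₀) • x := by
        rw [Finset.smul_sum]
        exact Finset.sum_congr rfl fun m _ => by rw [map_mul, mul_smul]
      rw [h2, hx, smul_one]
    have hSequiv : ∑ s : S, T s
        = ∑ f : (∀ q : G₀ ⧸ M, {g : G₀ // ((g : G₀) : G₀ ⧸ M) = q}),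
            ∏ q : G₀ ⧸ M, φ (f q).1 • x :=
      Fintype.sum_equiv
        (Equiv.subtypePiEquivPi (β := fun _ : G₀ ⧸ M => G₀)
          (p := fun q g => ((g : G₀) : G₀ ⧸ M) = q)) _ _ (fun s => rfl)
    rw [hSequiv]
    have hps : ∑ f : (∀ q : G₀ ⧸ M, {g : G₀ // ((g : G₀) : G₀ ⧸ M) = q}),
        ∏ q : G₀ ⧸ M, φ (f q).1 • x = ∏ q : G₀ ⧸ M,
          ∑ c : {g : G₀ // ((g : G₀) : G₀ ⧸ M) = q}, φ c.1 • x := by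
      rw [Finset.prod_univ_sum]
      rw [Fintype.piFinset_univ]
    rw [hps]
    rw [Finset.prod_congr rfl (fun q _ => hinner q), Finset.prod_const_one]
  -- orbit decomposition
  haveI : Fintype (orbitRel.Quotient G₀ S) := Fintype.ofFinite _
  letI : ∀ ω : orbitRel.Quotient G₀ S, Fintype ω.orbit := fun ω => Fintype.ofFinite _
  have hdecomp : ∑ s : S, T s = ∑ ω : orbitRel.Quotient G₀ S, ∑ u : ω.orbit, T u.1 := by
    calc ∑ s : S, T s
        = ∑ z : (Σ ω : orbitRel.Quotient G₀ S, ω.orbit), T z.2.1 :=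
          Fintype.sum_equiv (MulAction.selfEquivSigmaOrbits' G₀ S) (fun s => T s)
            (fun z : (Σ ω : orbitRel.Quotient G₀ S, ω.orbit) => T z.2.1) (fun s => rfl)
      _ = ∑ ω : orbitRel.Quotient G₀ S, ∑ u : ω.orbit, T u.1 := by
          rw [← Finset.univ_sigma_univ, Finset.sum_sigma]
  have horb : ∀ ω : orbitRel.Quotient G₀ S, ∃ w : A,
      ∑ u : ω.orbit, T u.1 = ∑ g : G₀, φ g • w := by
    intro ω
    set s₀ : S := ω.out with hs₀
    set K := MulAction.stabilizer G₀ s₀ with hK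
    haveI : Fintype K := Fintype.ofFinite _
    haveI : Fintype (G₀ ⧸ K) := Fintype.ofFinite _
    -- stabilizer has order 1 or p
    have hKdvd : Nat.card K ∣ p := by
      have hinj : Function.Injective ((QuotientGroup.mk' M).comp K.subtype) := by
        refine (injective_iff_map_eq_one _).mpr ?_
        intro k hk1
        have hkM : (k : G₀) ∈ M := (QuotientGroup.eq_one_iff _).mp hk1
        have hks : (k : G₀) • s₀ = s₀ := k.2
        have happ := congrArg (fun s : S => s.1 (1 : G₀ ⧸ M)) hks
        simp only [hsmul_def] at happ
        have hfixq : (k : G₀)⁻¹ • (1 : G₀ ⧸ M) = (1 : G₀ ⧸ M) := by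
          show (k : G₀)⁻¹ • ((1 : G₀) : G₀ ⧸ M) = ((1 : G₀) : G₀ ⧸ M)
          rw [MulAction.Quotient.smul_coe]
          refine (QuotientGroup.eq.mpr ?_)
          simpa using M.inv_mem hkM
        rw [hfixq] at happ
        exact Subtype.ext (mul_eq_right.mp happ)
      have h1 : Nat.card K ∣ Nat.card (G₀ ⧸ M) :=
        Subgroup.card_dvd_of_injective _ hinj
      rwa [← hidx]
    obtain ⟨z, hz⟩ : ∃ z : A, ∑ k : K, φ (k : G₀) • z = 1 := by
      rcases (Nat.Prime.eq_one_or_self_of_dvd hp _ hKdvd) with h1 | hP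
      · refine ⟨1, ?_⟩
        have hcard1 : (Finset.univ : Finset K).card = 1 := by
          rw [Finset.card_univ, ← Nat.card_eq_fintype_card, h1]
        simp only [smul_one]
        rw [Finset.sum_const, hcard1, one_smul]
      · obtain ⟨z, hz⟩ := hyp K (by rw [hP]; exact hp)
        exact ⟨z, by rw [← finsum_eq_sum_of_fintype]; exact hz⟩
    have hTfix : ∀ k : K, φ (k : G₀) • T s₀ = T s₀ := fun k =>
      (hTsmul (k : G₀) s₀).symm.trans (congrArg T k.2)
    refine ⟨z * T s₀, ?_⟩
    have hR : ∑ g : G₀, φ g • (z * T s₀) = ∑ q : G₀ ⧸ K, φ q.out • T s₀ := by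
      rw [aljadeff_cosetSum K (fun g => φ g • (z * T s₀))]
      refine Finset.sum_congr rfl fun q _ => ?_
      have e1 : ∑ k : K, φ (q.out * (k : G₀)) • (z * T s₀)
          = φ q.out • ∑ k : K, φ (k : G₀) • (z * T s₀) := by
        rw [Finset.smul_sum]
        exact Finset.sum_congr rfl fun k _ => by rw [map_mul, mul_smul]
      rw [e1]
      have e2 : ∑ k : K, φ (k : G₀) • (z * T s₀) = (∑ k : K, φ (k : G₀) • z) * T s₀ := by
        rw [Finset.sum_mul]
        exact Finset.sum_congr rfl fun k _ => by rw [smul_mul', hTfix k]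
      rw [e2, hz, one_mul]
    have hL : ∑ u : ω.orbit, T u.1 = ∑ q : G₀ ⧸ K, φ q.out • T s₀ := by
      have hmem : ∀ q : G₀ ⧸ K, q.out • s₀ ∈ ω.orbit := by
        intro q
        rw [orbitRel.Quotient.mem_orbit]
        show Quotient.mk'' (q.out • s₀) = ω
        have h1 : (Quotient.mk'' (q.out • s₀) : orbitRel.Quotient G₀ S) = Quotient.mk'' s₀ :=
          Quotient.sound (MulAction.mem_orbit s₀ q.out)
        rw [h1, hs₀]
        exact Quotient.out_eq' ω
      have hbij : Function.Bijective (fun q : G₀ ⧸ K => (⟨q.out • s₀, hmem q⟩ : ω.orbit)) := by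
        constructor
        · intro q q' h
          have h2 : q.out • s₀ = q'.out • s₀ := congrArg Subtype.val h
          have h3 : q'.out⁻¹ * q.out ∈ K := by
            refine MulAction.mem_stabilizer_iff.mpr ?_
            rw [mul_smul, h2, inv_smul_smul]
          have h4 := QuotientGroup.eq.mpr h3
          rw [QuotientGroup.out_eq', QuotientGroup.out_eq'] at h4
          exact h4.symm
        · rintro ⟨u, hu⟩
          rw [orbitRel.Quotient.mem_orbit] at hu
          have hrel : u ∈ MulAction.orbit G₀ s₀ := by
            have h2 : (Quotient.mk'' u : orbitRel.Quotient G₀ S) = Quotient.mk'' s₀ := by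
              rw [hu, hs₀]
              exact (Quotient.out_eq' ω).symm
            exact Quotient.exact' h2
          obtain ⟨g, hg⟩ := hrel
          refine ⟨QuotientGroup.mk g, Subtype.ext ?_⟩
          show (QuotientGroup.mk g : G₀ ⧸ K).out • s₀ = u
          have hk : g⁻¹ * (QuotientGroup.mk g : G₀ ⧸ K).out ∈ K :=
            QuotientGroup.eq.mp (QuotientGroup.out_eq' (QuotientGroup.mk g)).symm
          have : (QuotientGroup.mk g : G₀ ⧸ K).out • s₀
              = g • ((g⁻¹ * (QuotientGroup.mk g : G₀ ⧸ K).out) • s₀) := by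
            rw [← mul_smul, mul_inv_cancel_left]
          rw [this, (MulAction.mem_stabilizer_iff).mp hk]
          exact hg
      exact (Fintype.sum_bijective _ hbij (fun q => φ q.out • T s₀)
        (fun u : ω.orbit => T u.1) (fun q => (hTsmul q.out s₀).symm)).symm
    rw [hL, hR]
  choose w hw using horb
  refine ⟨∑ ω : orbitRel.Quotient G₀ S, w ω, ?_⟩
  rw [finsum_eq_sum_of_fintype]
  calc ∑ g : G₀, φ g • ∑ ω : orbitRel.Quotient G₀ S, w ω
      = ∑ g : G₀, ∑ ω : orbitRel.Quotient G₀ S, φ g • w ω := by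
        exact Finset.sum_congr rfl fun g _ => Finset.smul_sum
    _ = ∑ ω : orbitRel.Quotient G₀ S, ∑ g : G₀, φ g • w ω := Finset.sum_comm
    _ = ∑ ω : orbitRel.Quotient G₀ S, ∑ u : ω.orbit, T u.1 :=
        Finset.sum_congr rfl fun ω _ => (hw ω).symm
    _ = ∑ s : S, T s := hdecomp.symm
    _ = 1 := hT1

end AljadeffClimb
section AljadeffMain

variable {G : Type v} [Group G] {A : Type*} [CommRing A] [MulSemiringAction G A]

private theorem aljadeff_norm_one :
    ∀ (n : ℕ) (G₀ : Type u) [Group G₀] [Finite G₀] (φ : G₀ →* G), Nat.card G₀ ≤ n →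
      (∀ K : Subgroup G₀, (Nat.card K).Prime → ∃ z : A, ∑ᶠ k : K, φ (k : G₀) • z = 1) →
      ∃ y : A, ∑ᶠ g : G₀, φ g • y = 1 := by
  intro n
  induction n with
  | zero =>
    intro G₀ _ _ φ hle _
    exact absurd hle (by simpa using Nat.card_pos.ne')
  | succ n IH =>
    intro G₀ _ _ φ hle hyp
    classical
    haveI := Fintype.ofFinite G₀
    by_cases h1 : Nat.card G₀ = 1
    · refine ⟨1, ?_⟩
      rw [finsum_eq_sum_of_fintype]
      simp only [smul_one]
      rw [Finset.sum_const, Finset.card_univ, ← Nat.card_eq_fintype_card, h1, one_smul]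
    by_cases hpp : IsPrimePow (Nat.card G₀)
    · obtain ⟨p, k, hp, hk, hpk⟩ := (isPrimePow_nat_iff _).mp hpp
      haveI : Fact p.Prime := ⟨hp⟩
      by_cases hcp : (Nat.card G₀).Prime
      · obtain ⟨z, hz⟩ := hyp ⊤ (by rwa [Subgroup.card_top])
        refine ⟨z, ?_⟩
        haveI : Fintype (⊤ : Subgroup G₀) := Fintype.ofFinite _
        rw [finsum_eq_sum_of_fintype] at hz ⊢
        rw [← hz]
        exact Fintype.sum_equiv Subgroup.topEquiv.symm.toEquiv _ _ (fun g => rfl)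
      · have hG : IsPGroup p G₀ := IsPGroup.of_card hpk.symm
        haveI : Nontrivial G₀ := by
          rw [← Finite.one_lt_card_iff_nontrivial]
          have hpos := Nat.card_pos (α := G₀)
          omega
        obtain ⟨M, hMn, hMidx⟩ :=
          aljadeff_exists_normal_index_prime hp (Nat.card G₀) G₀ le_rfl hG inferInstance
        haveI := hMn
        have hMlt : Nat.card M < Nat.card G₀ := by
          have h := Subgroup.card_mul_index M
          rw [hMidx] at h
          have h2 : Nat.card M < Nat.card M * p :=
            (Nat.lt_mul_iff_one_lt_right Nat.card_pos).mpr hp.one_lt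
          omega
        obtain ⟨x, hx⟩ := IH M (φ.comp M.subtype) (by omega) (aljadeff_transfer φ M hyp)
        exact aljadeff_climb φ hp M hMidx hx hyp
    · -- not a prime power, at least two primes
      have hn0 : Nat.card G₀ ≠ 0 := Nat.card_pos.ne'
      set n0 := Nat.card G₀ with hn0def
      -- norms hit each `ordCompl`
      have key : ∀ p ∈ n0.primeFactors, ∃ x : A,
          ∑ g : G₀, φ g • x = (ordCompl[p] n0) • (1 : A) := by
        intro p hpmem
        haveI : Fact p.Prime := ⟨Nat.prime_of_mem_primeFactors hpmem⟩
        obtain ⟨P⟩ := (inferInstance : Nonempty (Sylow p G₀))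
        have hcardP : Nat.card P = p ^ (n0.factorization p) := P.card_eq_multiplicity
        have hlt : Nat.card P < n0 := by
          have hdvd : Nat.card P ∣ n0 := Subgroup.card_subgroup_dvd_card _
          rcases lt_or_eq_of_le (Nat.le_of_dvd (Nat.pos_of_ne_zero hn0) hdvd) with h | h
          · exact h
          · exfalso
            refine hpp ?_
            rw [← h, hcardP]
            exact ⟨p, n0.factorization p, Nat.Prime.prime (Fact.out),
              (Nat.Prime.factorization_pos_of_dvd Fact.out hn0
                (Nat.dvd_of_mem_primeFactors hpmem)), rfl⟩
        obtain ⟨x, hx⟩ := IH P (φ.comp (P : Subgroup G₀).subtype) (by omega)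
          (aljadeff_transfer φ (P : Subgroup G₀) hyp)
        haveI : Fintype (P : Subgroup G₀) := Fintype.ofFinite _
        haveI : Fintype (G₀ ⧸ (P : Subgroup G₀)) := Fintype.ofFinite _
        rw [finsum_eq_sum_of_fintype] at hx
        have hx' : ∑ k : (P : Subgroup G₀), φ (k : G₀) • x = 1 := hx
        refine ⟨x, ?_⟩
        rw [aljadeff_cosetSum (P : Subgroup G₀) (fun g => φ g • x)]
        have hq : ∀ q : G₀ ⧸ (P : Subgroup G₀),
            ∑ k : (P : Subgroup G₀), φ (q.out * k) • x = 1 := by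
          intro q
          have e1 : ∑ k : (P : Subgroup G₀), φ (q.out * k) • x
              = φ q.out • ∑ k : (P : Subgroup G₀), φ (k : G₀) • x := by
            rw [Finset.smul_sum]
            exact Finset.sum_congr rfl fun k _ => by rw [map_mul, mul_smul]
          rw [e1, hx', smul_one]
        rw [Finset.sum_congr rfl (fun q _ => hq q), Finset.sum_const, Finset.card_univ,
          ← Nat.card_eq_fintype_card]
        congr 1
        have hidx : Nat.card P * (P : Subgroup G₀).index = n0 :=
          Subgroup.card_mul_index (P : Subgroup G₀)
        rw [hcardP] at hidx
        show (P : Subgroup G₀).index = ordCompl[p] n0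
        rw [mul_comm] at hidx
        exact (Nat.div_eq_of_eq_mul_left (pow_pos (Fact.out : p.Prime).pos _) hidx.symm).symm
      -- Bézout combination
      have hcomb : ∀ s : Finset ℕ, s ⊆ n0.primeFactors → ∃ x : A,
          ∑ g : G₀, φ g • x = ((s.gcd fun p => ordCompl[p] n0 : ℕ) : ℤ) • (1 : A) := by
        intro s
        induction s using Finset.induction_on with
        | empty =>
          intro _
          refine ⟨0, ?_⟩
          simp
        | insert _ _ ha ih =>
          rename_i a s
          intro hsub
          obtain ⟨x1, hx1⟩ := key a (hsub (Finset.mem_insert_self a s))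
          obtain ⟨x2, hx2⟩ := ih (fun q hq => hsub (Finset.mem_insert_of_mem hq))
          set fa : ℕ := ordCompl[a] n0
          set gs : ℕ := s.gcd fun p => ordCompl[p] n0
          refine ⟨(Nat.gcdA fa gs) • x1 + (Nat.gcdB fa gs) • x2, ?_⟩
          have hsmul : ∀ (m : ℤ) (w : A), ∑ g : G₀, φ g • (m • w)
              = m • ∑ g : G₀, φ g • w := by
            intro m w
            rw [Finset.smul_sum]
            exact Finset.sum_congr rfl fun g _ =>
              (DistribMulAction.toAddMonoidHom A (φ g)).map_zsmul m w
          have hadd : ∑ g : G₀, φ g • ((Nat.gcdA fa gs) • x1 + (Nat.gcdB fa gs) • x2)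
              = ∑ g : G₀, φ g • ((Nat.gcdA fa gs) • x1)
                + ∑ g : G₀, φ g • ((Nat.gcdB fa gs) • x2) := by
            rw [← Finset.sum_add_distrib]
            exact Finset.sum_congr rfl fun g _ => smul_add _ _ _
          rw [hadd, hsmul, hsmul, hx1, hx2, Finset.gcd_insert]
          have hx1' : (fa • (1 : A)) = ((fa : ℤ)) • (1 : A) := by
            rw [natCast_zsmul]
          rw [hx1', smul_smul, smul_smul, ← add_smul]
          congr 1
          show Nat.gcdA fa gs * (fa : ℤ) + Nat.gcdB fa gs * (gs : ℤ) = ((Nat.gcd fa gs : ℕ) : ℤ)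
          rw [Nat.gcd_eq_gcd_ab fa gs]
          ring
      obtain ⟨x, hx⟩ := hcomb n0.primeFactors le_rfl
      have hgcd1 : (n0.primeFactors.gcd fun p => ordCompl[p] n0) = 1 := by
        set d := n0.primeFactors.gcd fun p => ordCompl[p] n0 with hd
        have h2 : 1 < n0 := by omega
        have hne : n0.primeFactors.Nonempty := Nat.nonempty_primeFactors.mpr h2
        obtain ⟨p₀, hp₀⟩ := hne
        by_contra hd1
        have hq : d.minFac.Prime := Nat.minFac_prime hd1
        have hqd : d.minFac ∣ d := Nat.minFac_dvd d
        have hdp₀ : d ∣ ordCompl[p₀] n0 := Finset.gcd_dvd hp₀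
        have hqn : d.minFac ∣ n0 := (hqd.trans hdp₀).trans (Nat.ordCompl_dvd n0 p₀)
        have hqmem : d.minFac ∈ n0.primeFactors := Nat.mem_primeFactors.mpr ⟨hq, hqn, hn0⟩
        have : d.minFac ∣ ordCompl[d.minFac] n0 := hqd.trans (Finset.gcd_dvd hqmem)
        exact Nat.not_dvd_ordCompl hq hn0 this
      rw [hgcd1] at hx
      refine ⟨x, ?_⟩
      rw [finsum_eq_sum_of_fintype, hx]
      simp
end AljadeffMain
/-- **Aljadeff's theorem (Theorem 4.1).** Let `G` be a finite group acting by ring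
automorphisms on a commutative ring `A` with unit.  If for every subgroup `H` of `G` of
prime order every `H`-fixed element of `A` is a norm `∑_{σ ∈ H} σ • a` (i.e.
`Ĥ⁰(H, A) = 0`), then the same holds for every subgroup `H` of `G`. -/
theorem fixed_eq_norm_of_prime_order_fixed_eq_norm_ring
    (G : Type*) [Group G] [Finite G] (A : Type*) [CommRing A] [MulSemiringAction G A]
    (hprime : ∀ H : Subgroup G, (Nat.card H).Prime →
      ∀ a : A, (∀ σ ∈ H, σ • a = a) → ∃ b : A, a = ∑ᶠ σ : H, (σ : G) • b) :
    ∀ H : Subgroup G, ∀ a : A, (∀ σ ∈ H, σ • a = a) → ∃ b : A, a = ∑ᶠ σ : H, (σ : G) • b := by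
  intro H a ha
  classical
  have hypG : ∀ K : Subgroup G, (Nat.card K).Prime →
      ∃ z : A, ∑ᶠ k : K, (MonoidHom.id G) (k : G) • z = 1 := by
    intro K hK
    obtain ⟨b, hb⟩ := hprime K hK 1 (fun σ _ => smul_one σ)
    exact ⟨b, hb.symm⟩
  have hypH := aljadeff_transfer (MonoidHom.id G) H hypG
  obtain ⟨y, hy⟩ := aljadeff_norm_one (Nat.card H) H ((MonoidHom.id G).comp H.subtype)
    le_rfl hypH
  refine ⟨y * a, ?_⟩
  haveI := Fintype.ofFinite H
  rw [finsum_eq_sum_of_fintype] at hy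
  have hy' : ∑ g : H, (g : G) • y = 1 := hy
  rw [finsum_eq_sum_of_fintype]
  calc a = (∑ g : H, (g : G) • y) * a := by rw [hy', one_mul]
    _ = ∑ g : H, ((g : G) • y) * a := Finset.sum_mul _ _ _
    _ = ∑ g : H, (g : G) • (y * a) := Finset.sum_congr rfl fun g _ => by
        rw [smul_mul', ha (g : G) g.2]
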